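/- arXiv:1004.3043 — 2 statements merged into one kernel-verified Lean document; each statement's English description precedes it below -/
import Mathlib

section
/- Let c > 0 and let x, g : [0,T] → ℝ be right-continuous functions with left limits such that g(0) = 0 and for all 0 ≤ s ≤ t ≤ T we have x(t) ≤ x(s) - c∫_s^t x(u) du + g(t) - g(s). Then for all t ∈ [0,T], x(t) ≤ e^{-ct}(x(0) + g(t)) + c∫_0^t e^{-c(t-u)}(g(t) - g(u)) du. -/
open MeasureTheory Set Real

lemma exp_integral_aux (c a b : ℝ) :
    ∫ u in a..b, c * Real.exp (c * u) = Real.exp (c * b) - Real.exp (c * a) := by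
  have : ∀ u : ℝ, HasDerivAt (fun v => Real.exp (c * v)) (c * Real.exp (c * u)) u := by
    intro u
    have := (Real.hasDerivAt_exp (c * u)).comp u ((hasDerivAt_id u).const_mul c)
    exact this.congr_deriv (by simp only [id_eq, mul_one]; ring)
  rw [intervalIntegral.integral_eq_sub_of_hasDerivAt (fun u _ => this u)]
  exact (Continuous.intervalIntegrable (by continuity) a b)

lemma fubini_exp (c t : ℝ) (ht : 0 ≤ t) (x : ℝ → ℝ)
    (hx : IntervalIntegrable x volume 0 t) :
    ∫ u in (0:ℝ)..t, (c * Real.exp (c * u)) * (∫ v in (0:ℝ)..u, x v)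
      = ∫ v in (0:ℝ)..t, (Real.exp (c * t) - Real.exp (c * v)) * x v := by
  set μ := volume.restrict (Ioc (0:ℝ) t) with hμ
  have hxI : IntegrableOn x (Ioc 0 t) := (intervalIntegrable_iff_integrableOn_Ioc_of_le ht).mp hx
  have hexpI : IntegrableOn (fun u => c * Real.exp (c * u)) (Ioc 0 t) :=
    (Continuous.integrableOn_Ioc (by continuity))
  have hS : MeasurableSet {p : ℝ × ℝ | p.2 ≤ p.1} := measurableSet_le measurable_snd measurable_fst
  have hF0 : Integrable (fun p : ℝ × ℝ => (c * Real.exp (c * p.1)) * x p.2) (μ.prod μ) :=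
    hexpI.mul_prod hxI
  set f : ℝ → ℝ → ℝ := fun u v =>
    {p : ℝ × ℝ | p.2 ≤ p.1}.indicator (fun p => (c * Real.exp (c * p.1)) * x p.2) (u, v) with hf
  have hfi : Integrable (Function.uncurry f) (μ.prod μ) := by
    have := hF0.indicator hS
    exact this
  have swap := integral_integral_swap hfi
  have hL : ∫ u in (0:ℝ)..t, (c * Real.exp (c * u)) * (∫ v in (0:ℝ)..u, x v)
      = ∫ u, (∫ v, f u v ∂μ) ∂μ := by
    rw [intervalIntegral.integral_of_le ht]
    refine setIntegral_congr_fun measurableSet_Ioc (fun u hu => ?_)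
    have h1 : ∀ v, f u v = (Iic u).indicator (fun v => (c * Real.exp (c * u)) * x v) v := by
      intro v
      simp only [hf, Set.indicator]
      by_cases h : v ≤ u <;> simp [h]
    simp_rw [h1]
    rw [integral_indicator measurableSet_Iic]
    have : Iic u ∩ Ioc 0 t = Ioc 0 u := by
      ext v; simp only [mem_inter_iff, mem_Iic, mem_Ioc]
      constructor
      · rintro ⟨h1, h2, h3⟩; exact ⟨h2, h1⟩
      · rintro ⟨h1, h2⟩; exact ⟨h2, h1, h2.trans hu.2⟩
    rw [hμ, Measure.restrict_restrict measurableSet_Iic, this,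
      ← intervalIntegral.integral_of_le hu.1.le, intervalIntegral.integral_const_mul]
  have hR : ∫ v in (0:ℝ)..t, (Real.exp (c * t) - Real.exp (c * v)) * x v
      = ∫ v, (∫ u, f u v ∂μ) ∂μ := by
    rw [intervalIntegral.integral_of_le ht]
    refine setIntegral_congr_fun measurableSet_Ioc (fun v hv => ?_)
    have h1 : ∀ u, f u v = (Ici v).indicator (fun u => (c * Real.exp (c * u)) * x v) u := by
      intro u
      simp only [hf, Set.indicator]
      by_cases h : v ≤ u <;> simp [h]
    simp_rw [h1]
    rw [integral_indicator measurableSet_Ici]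
    have : Ici v ∩ Ioc 0 t = Icc v t := by
      ext u; simp only [mem_inter_iff, mem_Ici, mem_Ioc, mem_Icc]
      exact ⟨fun ⟨h1, _, h3⟩ => ⟨h1, h3⟩, fun ⟨h1, h2⟩ => ⟨h1, hv.1.trans_le h1, h2⟩⟩
    rw [hμ, Measure.restrict_restrict measurableSet_Ici, this,
      integral_Icc_eq_integral_Ioc, ← intervalIntegral.integral_of_le hv.2,
      intervalIntegral.integral_mul_const, exp_integral_aux]
  rw [hL, hR]; exact swap

set_option maxHeartbeats 1000000 in
theorem gronwall_type_comparison
    (T c : ℝ) (hT : 0 ≤ T) (hc : 0 < c) (x g : ℝ → ℝ)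
    (hx : IntervalIntegrable x volume 0 T)
    (hg : IntervalIntegrable g volume 0 T)
    (hg0 : g 0 = 0)
    (hineq : ∀ s t : ℝ, 0 ≤ s → s ≤ t → t ≤ T →
      x t ≤ x s - c * (∫ u in s..t, x u) + g t - g s) :
    ∀ t ∈ Set.Icc (0:ℝ) T,
      x t ≤ Real.exp (-c * t) * (x 0 + g t)
            + c * ∫ u in (0:ℝ)..t, Real.exp (-c * (t - u)) * (g t - g u) := by
  rintro t ⟨ht0, htT⟩
  set F : ℝ → ℝ := fun s => ∫ u in (0:ℝ)..s, x u with hF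
  -- restriction of integrability
  have hsub : ∀ a b : ℝ, a ∈ Icc (0:ℝ) T → b ∈ Icc (0:ℝ) T → uIcc a b ⊆ uIcc (0:ℝ) T := by
    intro a b ha hb
    apply uIcc_subset_uIcc <;> rw [uIcc_of_le hT] <;> assumption
  have hxab : ∀ a b : ℝ, a ∈ Icc (0:ℝ) T → b ∈ Icc (0:ℝ) T → IntervalIntegrable x volume a b :=
    fun a b ha hb => hx.mono_set (hsub a b ha hb)
  have hgab : ∀ a b : ℝ, a ∈ Icc (0:ℝ) T → b ∈ Icc (0:ℝ) T → IntervalIntegrable g volume a b :=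
    fun a b ha hb => hg.mono_set (hsub a b ha hb)
  have htmem : t ∈ Icc (0:ℝ) T := ⟨ht0, htT⟩
  have h0mem : (0:ℝ) ∈ Icc (0:ℝ) T := ⟨le_refl _, hT⟩
  have hxt : IntervalIntegrable x volume 0 t := hxab 0 t h0mem htmem
  have hgt : IntervalIntegrable g volume 0 t := hgab 0 t h0mem htmem
  -- h is nonincreasing
  set h : ℝ → ℝ := fun s => x s - g s + c * F s with hh
  have hmono : ∀ s u : ℝ, 0 ≤ s → s ≤ u → u ≤ T → h u ≤ h s := by
    intro s u hs hsu huT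
    have hsmem : s ∈ Icc (0:ℝ) T := ⟨hs, hsu.trans huT⟩
    have humem : u ∈ Icc (0:ℝ) T := ⟨hs.trans hsu, huT⟩
    have hFd : F u - F s = ∫ v in s..u, x v :=
      intervalIntegral.integral_interval_sub_left (hxab 0 u h0mem humem) (hxab 0 s h0mem hsmem)
    have := hineq s u hs hsu huT
    rw [← hFd] at this
    simp only [hh]
    nlinarith [this]
  -- continuity of F, hence integrability of h
  have hFcont : ContinuousOn F (uIcc (0:ℝ) t) :=
    intervalIntegral.continuousOn_primitive_interval' hxt left_mem_uIcc
  have hFint : IntervalIntegrable F volume 0 t := hFcont.intervalIntegrable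
  have hecont : ContinuousOn (fun u => Real.exp (c * u)) (uIcc (0:ℝ) t) := by
    apply Continuous.continuousOn; continuity
  have heF : IntervalIntegrable (fun u => Real.exp (c * u) * F u) volume 0 t :=
    hFint.continuousOn_mul hecont
  have hex : IntervalIntegrable (fun u => Real.exp (c * u) * x u) volume 0 t :=
    hxt.continuousOn_mul hecont
  have heg : IntervalIntegrable (fun u => Real.exp (c * u) * g u) volume 0 t :=
    hgt.continuousOn_mul hecont
  have heh : IntervalIntegrable (fun u => Real.exp (c * u) * h u) volume 0 t := by
    have : (fun u => Real.exp (c * u) * h u)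
        = fun u => Real.exp (c * u) * x u - Real.exp (c * u) * g u
            + c * (Real.exp (c * u) * F u) := by
      funext u; simp only [hh]; ring
    rw [this]
    exact (hex.sub heg).add (heF.const_mul c)
  -- notation for the integrals
  set A : ℝ := ∫ u in (0:ℝ)..t, Real.exp (c * u) * x u with hA
  set B : ℝ := ∫ u in (0:ℝ)..t, Real.exp (c * u) * g u with hB
  set H : ℝ := ∫ u in (0:ℝ)..t, Real.exp (c * u) * h u with hH
  set E : ℝ := ∫ u in (0:ℝ)..t, Real.exp (c * u) with hE
  have hEint : IntervalIntegrable (fun u => Real.exp (c * u)) volume 0 t :=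
    Continuous.intervalIntegrable (by continuity) 0 t
  have hEval : c * E = Real.exp (c * t) - 1 := by
    rw [hE, ← intervalIntegral.integral_const_mul, exp_integral_aux]
    simp
  -- Fubini identity : c * ∫ e F = exp(ct) F t - A
  have hfub : c * (∫ u in (0:ℝ)..t, Real.exp (c * u) * F u) = Real.exp (c * t) * F t - A := by
    have h1 := fubini_exp c t ht0 x hxt
    have h2 : ∫ u in (0:ℝ)..t, (c * Real.exp (c * u)) * (∫ v in (0:ℝ)..u, x v)
        = c * (∫ u in (0:ℝ)..t, Real.exp (c * u) * F u) := by
      rw [← intervalIntegral.integral_const_mul]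
      apply intervalIntegral.integral_congr
      intro u _; simp only [hF]; ring
    have h3 : ∫ v in (0:ℝ)..t, (Real.exp (c * t) - Real.exp (c * v)) * x v
        = Real.exp (c * t) * F t - A := by
      have : (fun v => (Real.exp (c * t) - Real.exp (c * v)) * x v)
          = fun v => Real.exp (c * t) * x v - Real.exp (c * v) * x v := by
        funext v; ring
      rw [this, intervalIntegral.integral_sub ((hxt.const_mul _)) hex,
        intervalIntegral.integral_const_mul]
    rw [← h2, h1, h3]
  -- H = exp(ct) F t - B
  have hHeq : H = Real.exp (c * t) * F t - B := by
    have : H = A - B + c * (∫ u in (0:ℝ)..t, Real.exp (c * u) * F u) := by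
      rw [hH, hA, hB, ← intervalIntegral.integral_const_mul,
        ← intervalIntegral.integral_sub hex heg,
        ← intervalIntegral.integral_add (hex.sub heg) (heF.const_mul c)]
      apply intervalIntegral.integral_congr
      intro u _; simp only [hh]; ring
    rw [this, hfub]; ring
  -- lower bound on H
  have hHge : h t * E ≤ H := by
    have : (∫ u in (0:ℝ)..t, Real.exp (c * u) * h t) ≤ H := by
      apply intervalIntegral.integral_mono_on ht0 (hEint.mul_const _) heh
      intro u hu
      have : h t ≤ h u := hmono u t hu.1 hu.2 htT
      have he : 0 < Real.exp (c * u) := Real.exp_pos _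
      nlinarith
    rwa [intervalIntegral.integral_mul_const, mul_comm] at this
  -- main inequality in terms of h
  have hexp1 : Real.exp (-c * t) * Real.exp (c * t) = 1 := by
    rw [← Real.exp_add]; ring_nf; exact Real.exp_zero
  have hepos : 0 < Real.exp (-c * t) := Real.exp_pos _
  have hkey : h t ≤ Real.exp (-c * t) * h 0 + c * Real.exp (-c * t) * H := by
    have h1 : Real.exp (-c * t) * h t ≤ Real.exp (-c * t) * h 0 :=
      mul_le_mul_of_nonneg_left (hmono 0 t (le_refl _) ht0 htT) hepos.le
    have h2 : c * Real.exp (-c * t) * (h t * E) ≤ c * Real.exp (-c * t) * H :=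
      mul_le_mul_of_nonneg_left hHge (by positivity)
    have h3 : c * Real.exp (-c * t) * (h t * E) = h t - Real.exp (-c * t) * h t := by
      linear_combination (Real.exp (-c * t) * h t) * hEval + (h t) * hexp1
    linarith
  -- compute h 0 = x 0
  have hF0 : F 0 = 0 := intervalIntegral.integral_same
  have hh0 : h 0 = x 0 := by simp [hh, hF0, hg0]
  -- compute the goal's integral
  have hD : (∫ u in (0:ℝ)..t, Real.exp (-c * (t - u)) * (g t - g u))
      = Real.exp (-c * t) * (g t * E) - Real.exp (-c * t) * B := by
    have h1 : (fun u => Real.exp (-c * (t - u)) * (g t - g u))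
        = fun u => Real.exp (-c * t) * (Real.exp (c * u) * g t)
            - Real.exp (-c * t) * (Real.exp (c * u) * g u) := by
      funext u
      have : Real.exp (-c * (t - u)) = Real.exp (-c * t) * Real.exp (c * u) := by
        rw [← Real.exp_add]; ring_nf
      rw [this]; ring
    rw [h1, intervalIntegral.integral_sub (((hEint.mul_const _).const_mul _))
      ((heg.const_mul _)), intervalIntegral.integral_const_mul,
      intervalIntegral.integral_const_mul, intervalIntegral.integral_mul_const]
    rw [← hE, ← hB]; ring
  -- assemble
  have hxteq : x t = h t + g t - c * F t := by simp only [hh]; ring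
  rw [hD, hxteq]
  have hcH : c * Real.exp (-c * t) * H = c * F t - c * Real.exp (-c * t) * B := by
    linear_combination (c * Real.exp (-c * t)) * hHeq + (c * F t) * hexp1
  have hgtE : c * (Real.exp (-c * t) * (g t * E)) = g t * (1 - Real.exp (-c * t)) := by
    linear_combination (Real.exp (-c * t) * g t) * hEval + (g t) * hexp1
  have hrhs : Real.exp (-c * t) * (x 0 + g t)
      + c * (Real.exp (-c * t) * (g t * E) - Real.exp (-c * t) * B)
      = Real.exp (-c * t) * x 0 + g t - c * Real.exp (-c * t) * B := by
    linear_combination hgtE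
  rw [hrhs]
  rw [hh0] at hkey
  linarith [hkey, hcH]
end

section
/- Let ρ(s, x, y) denote the transition density of the 2-dimensional Gaussian process (q_t, p_t) given by p_t = p_0 + σ W_t / μ, q_t = q_0 + ∫_0^t p_s ds (integrated Brownian motion), with σ, μ > 0 fixed. Then for Δ = [-δ²/2, δ²/2] × [-δ/2, δ/2] and q_0 ≠ 0, there exists A = A(T, q_0, σ, μ) such that ∫_Δ ∫_0^T ρ(s, (q_0, 0), y) ds dy ≤ A δ³; i.e., the expected occupation time of Δ up to time T is at most A δ³. -/
open MeasureTheory Set Real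

/-- Transition density of the Kolmogorov process `(q_t, p_t)` with
`p_t = p₀ + σ W_t / μ` and `q_t = q₀ + ∫_0^t p_s ds`, started at `x = (q₀, p₀)`,
evaluated at time `s > 0` and point `y = (y₁, y₂)`.  The covariance matrix is
`(σ²/μ²) * [[s³/3, s²/2], [s²/2, s]]`, whose determinant is `(σ²/μ²)² s⁴ / 12`. -/
noncomputable def kolmogorovDensity (σ μ : ℝ) (s : ℝ) (x y : ℝ × ℝ) : ℝ :=
  let a := σ ^ 2 / μ ^ 2
  let v₁ := y.1 - (x.1 + x.2 * s)
  let v₂ := y.2 - x.2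
  (1 / (2 * Real.pi * Real.sqrt (a ^ 2 * s ^ 4 / 12))) *
    Real.exp (-(1 / (2 * a)) *
      ((12 / s ^ 4) * (s * v₁ ^ 2 - s ^ 2 * v₁ * v₂ + (s ^ 3 / 3) * v₂ ^ 2)))

open intervalIntegral

lemma exp_neg_le_rpow {t : ℝ} (ht : 0 < t) : Real.exp (-t) ≤ t ^ (-(2:ℝ)/5) := by
  rcases le_total t 1 with h1 | h1
  · calc Real.exp (-t) ≤ 1 := by
          rw [Real.exp_le_one_iff]; linarith
       _ ≤ t ^ (-(2:ℝ)/5) :=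
          Real.one_le_rpow_of_pos_of_le_one_of_nonpos ht h1 (by norm_num)
  · have h2 : t ^ ((2:ℝ)/5) ≤ Real.exp t := by
      calc t ^ ((2:ℝ)/5) ≤ t ^ (1:ℝ) :=
            Real.rpow_le_rpow_of_exponent_le h1 (by norm_num)
        _ = t := Real.rpow_one t
        _ ≤ Real.exp t := by linarith [Real.add_one_le_exp t]
    have h3 : (0:ℝ) < t ^ ((2:ℝ)/5) := Real.rpow_pos_of_pos ht _
    rw [Real.exp_neg, show -(2:ℝ)/5 = -((2:ℝ)/5) by norm_num,
      Real.rpow_neg ht.le]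
    exact inv_anti₀ h3 h2

lemma abs_rpow_intervalIntegrable {r : ℝ} (hr : -1 < r) (a b : ℝ) :
    IntervalIntegrable (fun x : ℝ => |x| ^ r) volume a b := by
  have H : ∀ c : ℝ, 0 ≤ c → IntervalIntegrable (fun x : ℝ => |x| ^ r) volume 0 c := by
    intro c hc
    have h0 := intervalIntegrable_rpow' (a := 0) (b := c) hr
    rw [intervalIntegrable_iff, uIoc_of_le hc] at h0 ⊢
    exact h0.congr_fun (fun x hx => by rw [abs_of_pos hx.1]) measurableSet_Ioc
  have key : ∀ c : ℝ, IntervalIntegrable (fun x : ℝ => |x| ^ r) volume 0 c := by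
    intro c
    rcases le_total 0 c with hc | hc
    · exact H c hc
    · rw [IntervalIntegrable.iff_comp_neg]
      simpa [abs_neg] using (H (-c) (by linarith))
  exact (key a).symm.trans (key b)

lemma density_bound (σ μ q₀ : ℝ) (hσ : 0 < σ) (hμ : 0 < μ) {s : ℝ} (hs : 0 < s)
    (y : ℝ × ℝ) (hy : y.1 ≠ q₀) :
    kolmogorovDensity σ μ s (q₀, 0) y ≤
      (Real.sqrt 12 / (2 * Real.pi * (σ^2/μ^2)) * (3/(2*(σ^2/μ^2))) ^ (-(2:ℝ)/5)) *
        s ^ (-(4:ℝ)/5) * |y.1 - q₀| ^ (-(4:ℝ)/5) := by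
  set a : ℝ := σ^2/μ^2 with ha_def
  have ha : 0 < a := by positivity
  set v₁ : ℝ := y.1 - q₀ with hv₁_def
  have hv : v₁ ≠ 0 := sub_ne_zero.mpr hy
  set v₂ : ℝ := y.2 with hv₂_def
  have hπ := Real.pi_pos
  have h12 : (0:ℝ) < Real.sqrt 12 := by positivity
  have habs : (0:ℝ) < |v₁| := abs_pos.mpr hv
  have hexpand : kolmogorovDensity σ μ s (q₀, 0) y =
      (1 / (2 * Real.pi * Real.sqrt (a ^ 2 * s ^ 4 / 12))) *
        Real.exp (-(1 / (2 * a)) *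
          ((12 / s ^ 4) * (s * v₁ ^ 2 - s ^ 2 * v₁ * v₂ + (s ^ 3 / 3) * v₂ ^ 2))) := by
    simp only [kolmogorovDensity, hv₁_def, hv₂_def, ha_def]
    norm_num
  clear_value a v₁ v₂
  rw [hexpand]
  have hsqrt : Real.sqrt (a ^ 2 * s ^ 4 / 12) = a * s^2 / Real.sqrt 12 := by
    rw [show a^2*s^4/12 = (a*s^2/Real.sqrt 12)^2 by
      rw [div_pow, Real.sq_sqrt (by norm_num : (0:ℝ) ≤ 12)]; ring]
    exact Real.sqrt_sq (by positivity)
  rw [hsqrt]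
  set t₀ : ℝ := 3 * v₁^2 / (2 * a * s^3) with ht₀_def
  have hv₁sq : (0:ℝ) < v₁^2 := by positivity
  have ht₀ : 0 < t₀ := by positivity
  have h2 : Real.exp (-(1 / (2 * a)) *
      ((12 / s ^ 4) * (s * v₁ ^ 2 - s ^ 2 * v₁ * v₂ + (s ^ 3 / 3) * v₂ ^ 2))) ≤
      Real.exp (-t₀) := by
    rw [Real.exp_le_exp]
    have hdiff : (1 / (2 * a)) *
        ((12 / s ^ 4) * (s * v₁ ^ 2 - s ^ 2 * v₁ * v₂ + (s ^ 3 / 3) * v₂ ^ 2)) - t₀ =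
        (2*s*v₂ - 3*v₁)^2 / (2 * a * s^3) := by
      rw [ht₀_def]
      field_simp
      ring
    nlinarith [div_nonneg (sq_nonneg (2*s*v₂ - 3*v₁)) (by positivity : (0:ℝ) ≤ 2*a*s^3)]
  have h3 : Real.exp (-t₀) ≤ t₀ ^ (-(2:ℝ)/5) := exp_neg_le_rpow ht₀
  have hs3 : s ^ (-(3:ℝ)) = (s^3)⁻¹ := by
    rw [show (-(3:ℝ)) = -((3:ℕ):ℝ) by norm_num, Real.rpow_neg hs.le, Real.rpow_natCast]
  have hv2 : |v₁| ^ ((2:ℝ)) = v₁^2 := by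
    rw [show ((2:ℝ)) = ((2:ℕ):ℝ) by norm_num, Real.rpow_natCast, sq_abs]
  have e1 : t₀ = (3/(2*a)) * (s ^ (-(3:ℝ)) * |v₁| ^ ((2:ℝ))) := by
    rw [hs3, hv2, ht₀_def]
    field_simp
  have e2 : t₀ ^ (-(2:ℝ)/5) = (3/(2*a)) ^ (-(2:ℝ)/5) * (s ^ ((6:ℝ)/5) * |v₁| ^ (-(4:ℝ)/5)) := by
    rw [e1, Real.mul_rpow (by positivity) (by positivity),
      Real.mul_rpow (by positivity) (by positivity),
      ← Real.rpow_mul hs.le, ← Real.rpow_mul (abs_nonneg _)]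
    norm_num
  have hsplit : s ^ ((6:ℝ)/5) = s^2 * s ^ (-(4:ℝ)/5) := by
    rw [← Real.rpow_natCast s 2, ← Real.rpow_add hs]
    norm_num
  calc (1 / (2 * Real.pi * (a * s^2 / Real.sqrt 12))) *
        Real.exp (-(1 / (2 * a)) *
          ((12 / s ^ 4) * (s * v₁ ^ 2 - s ^ 2 * v₁ * v₂ + (s ^ 3 / 3) * v₂ ^ 2)))
      ≤ (1 / (2 * Real.pi * (a * s^2 / Real.sqrt 12))) * (t₀ ^ (-(2:ℝ)/5)) :=
        mul_le_mul_of_nonneg_left (h2.trans h3) (by positivity)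
    _ = (Real.sqrt 12 / (2 * Real.pi * a) * (3/(2*a)) ^ (-(2:ℝ)/5)) *
        s ^ (-(4:ℝ)/5) * |v₁| ^ (-(4:ℝ)/5) := by
        rw [e2, hsplit]
        field_simp

lemma inner_bound (T σ μ q₀ : ℝ) (hT : 0 < T) (hσ : 0 < σ) (hμ : 0 < μ)
    (y : ℝ × ℝ) (hy : y.1 ≠ q₀) :
    (∫ s in (0:ℝ)..T, kolmogorovDensity σ μ s (q₀, 0) y) ≤
      (5 * (Real.sqrt 12 / (2 * Real.pi * (σ^2/μ^2)) * (3/(2*(σ^2/μ^2))) ^ (-(2:ℝ)/5)) *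
        T ^ ((1:ℝ)/5)) * |y.1 - q₀| ^ (-(4:ℝ)/5) := by
  set K : ℝ := Real.sqrt 12 / (2 * Real.pi * (σ^2/μ^2)) * (3/(2*(σ^2/μ^2))) ^ (-(2:ℝ)/5)
    with hK_def
  have hπ := Real.pi_pos
  have hK : 0 < K := by positivity
  set c : ℝ := |y.1 - q₀| ^ (-(4:ℝ)/5) with hc_def
  have hc : 0 ≤ c := Real.rpow_nonneg (abs_nonneg _) _
  by_cases hf : IntervalIntegrable (fun s => kolmogorovDensity σ μ s (q₀, 0) y) volume 0 T
  · have hg : IntervalIntegrable (fun s : ℝ => K * s ^ (-(4:ℝ)/5) * c) volume 0 T :=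
      ((intervalIntegrable_rpow' (by norm_num)).const_mul K).mul_const c
    have hpt : ∀ s ∈ Icc (0:ℝ) T,
        kolmogorovDensity σ μ s (q₀, 0) y ≤ K * s ^ (-(4:ℝ)/5) * c := by
      intro s hsIcc
      rcases eq_or_lt_of_le hsIcc.1 with h0 | h0
      · rw [← h0]
        have e1 : kolmogorovDensity σ μ (0:ℝ) (q₀, 0) y = 0 := by
          simp [kolmogorovDensity]
        have e2 : ((0:ℝ) ^ (-(4:ℝ)/5)) = 0 := Real.zero_rpow (by norm_num)
        rw [e1, e2, mul_zero, zero_mul]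
      · exact density_bound σ μ q₀ hσ hμ h0 y hy
    calc (∫ s in (0:ℝ)..T, kolmogorovDensity σ μ s (q₀, 0) y)
        ≤ ∫ s in (0:ℝ)..T, K * s ^ (-(4:ℝ)/5) * c :=
          intervalIntegral.integral_mono_on hT.le hf hg hpt
      _ = K * c * ∫ s in (0:ℝ)..T, s ^ (-(4:ℝ)/5) := by
          simp only [intervalIntegral.integral_mul_const, intervalIntegral.integral_const_mul]
          ring
      _ = (5 * K * T ^ ((1:ℝ)/5)) * c := by
          rw [integral_rpow (Or.inl (by norm_num))]
          norm_num [Real.zero_rpow]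
          ring
  · rw [intervalIntegral.integral_undef hf]
    positivity

theorem occupation_time_upper_bound
    (T σ μ q₀ : ℝ) (hT : 0 < T) (hσ : 0 < σ) (hμ : 0 < μ) (hq₀ : q₀ ≠ 0) :
    ∃ A > (0:ℝ), ∀ δ ∈ Set.Ioo (0:ℝ) 1,
      (∫ y in (Set.Icc (-(δ ^ 2) / 2) (δ ^ 2 / 2)) ×ˢ (Set.Icc (-δ / 2) (δ / 2)),
          ∫ s in (0:ℝ)..T, kolmogorovDensity σ μ s (q₀, 0) y)
        ≤ A * δ ^ 3 := by
  have hπ := Real.pi_pos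
  have hq : 0 < |q₀| := abs_pos.mpr hq₀
  set c₂ : ℝ := 5 * (Real.sqrt 12 / (2 * Real.pi * (σ^2/μ^2)) * (3/(2*(σ^2/μ^2))) ^ (-(2:ℝ)/5)) *
      T ^ ((1:ℝ)/5) with hc₂_def
  have hc₂ : 0 < c₂ := by positivity
  set m : ℝ := min (Real.sqrt |q₀|) 1 with hm_def
  have hm0 : 0 < m := lt_min (Real.sqrt_pos.mpr hq) one_pos
  set R : ℝ := |q₀| + 1 with hR_def
  have hR : 0 < R := by positivity
  -- integrability of the shifted power function on intervals
  have hint : ∀ u v : ℝ, u ≤ v →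
      IntegrableOn (fun x : ℝ => |x - q₀| ^ (-(4:ℝ)/5)) (Icc u v) volume := by
    intro u v huv
    refine (intervalIntegrable_iff_integrableOn_Icc_of_le huv).mp ?_
    have := (abs_rpow_intervalIntegrable (r := -(4:ℝ)/5) (by norm_num)
      (u - q₀) (v - q₀)).comp_sub_right q₀
    simpa using this
  refine ⟨1 + c₂ * (|q₀|/2) ^ (-(4:ℝ)/5) + c₂ * (10 * R ^ ((1:ℝ)/5)) / m^3,
    by positivity, ?_⟩
  intro δ hδ
  obtain ⟨hδ0, hδ1⟩ := hδ
  set A : ℝ := 1 + c₂ * (|q₀|/2) ^ (-(4:ℝ)/5) + c₂ * (10 * R ^ ((1:ℝ)/5)) / m^3 with hA_def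
  have hA : 0 < A := by positivity
  set I₁ : Set ℝ := Set.Icc (-(δ ^ 2) / 2) (δ ^ 2 / 2) with hI₁_def
  set I₂ : Set ℝ := Set.Icc (-δ / 2) (δ / 2) with hI₂_def
  have hI₁le : -(δ^2)/2 ≤ δ^2/2 := by have := sq_nonneg δ; linarith [sq_nonneg δ]
  by_cases hFi : IntegrableOn
      (fun y : ℝ × ℝ => ∫ s in (0:ℝ)..T, kolmogorovDensity σ μ s (q₀, 0) y)
      (I₁ ×ˢ I₂) volume
  swap
  · rw [MeasureTheory.integral_undef hFi]
    positivity
  -- integrability of G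
  have hI₁int : IntegrableOn (fun x : ℝ => c₂ * |x - q₀| ^ (-(4:ℝ)/5)) I₁ volume :=
    (hint _ _ hI₁le).const_mul c₂
  have hGint : IntegrableOn
      (fun y : ℝ × ℝ => (c₂ * |y.1 - q₀| ^ (-(4:ℝ)/5)) * 1) (I₁ ×ˢ I₂) volume := by
    rw [IntegrableOn, MeasureTheory.Measure.volume_eq_prod, ← Measure.prod_restrict]
    exact hI₁int.mul_prod (integrableOn_const measure_Icc_lt_top.ne)
  have hae : (fun y : ℝ × ℝ => ∫ s in (0:ℝ)..T, kolmogorovDensity σ μ s (q₀, 0) y)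
      ≤ᵐ[volume.restrict (I₁ ×ˢ I₂)]
      (fun y : ℝ × ℝ => (c₂ * |y.1 - q₀| ^ (-(4:ℝ)/5)) * 1) := by
    apply ae_restrict_of_ae
    have hnull : volume {y : ℝ × ℝ | y.1 = q₀} = 0 := by
      have hset : {y : ℝ × ℝ | y.1 = q₀} = ({q₀} : Set ℝ) ×ˢ (Set.univ : Set ℝ) := by
        ext z
        simp only [Set.mem_setOf_eq, Set.mem_prod, Set.mem_singleton_iff, Set.mem_univ,
          and_true]
      rw [hset, MeasureTheory.Measure.volume_eq_prod, Measure.prod_prod]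
      simp
    rw [MeasureTheory.ae_iff]
    refine measure_mono_null (fun y hy => ?_) hnull
    simp only [Set.mem_setOf_eq, not_le] at hy ⊢
    by_contra hne
    rw [mul_one] at hy
    exact absurd (inner_bound T σ μ q₀ hT hσ hμ y hne) (not_le.mpr hy)
  have hmono := MeasureTheory.setIntegral_mono_ae_restrict hFi hGint hae
  have hGval : (∫ y in I₁ ×ˢ I₂, (c₂ * |y.1 - q₀| ^ (-(4:ℝ)/5)) * 1) =
      (∫ x in I₁, c₂ * |x - q₀| ^ (-(4:ℝ)/5)) * δ := by
    rw [MeasureTheory.Measure.volume_eq_prod,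
      MeasureTheory.setIntegral_prod_mul (fun x : ℝ => c₂ * |x - q₀| ^ (-(4:ℝ)/5))
        (fun _ : ℝ => (1:ℝ)) I₁ I₂]
    congr 1
    rw [MeasureTheory.setIntegral_const, hI₂_def, measureReal_def, Real.volume_Icc]
    rw [show δ/2 - (-δ/2) = δ by ring, ENNReal.toReal_ofReal hδ0.le]
    simp
  rw [hGval] at hmono
  have hvolI₁ : (volume I₁).toReal = δ^2 := by
    rw [hI₁_def, Real.volume_Icc, show δ^2/2 - (-(δ^2)/2) = δ^2 by ring,
      ENNReal.toReal_ofReal (by positivity)]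
  rcases le_total δ (Real.sqrt |q₀|) with hd | hd
  · -- small δ
    have hq2 : δ^2 ≤ |q₀| := by
      calc δ^2 ≤ (Real.sqrt |q₀|)^2 := pow_le_pow_left₀ hδ0.le hd 2
        _ = |q₀| := Real.sq_sqrt hq.le
    have hptw : ∀ x ∈ I₁, c₂ * |x - q₀| ^ (-(4:ℝ)/5) ≤ c₂ * (|q₀|/2) ^ (-(4:ℝ)/5) := by
      intro x hx
      have hx1 : |x| ≤ |q₀|/2 := by
        rw [abs_le]
        constructor
        · have := hx.1; simp only [hI₁_def, Set.mem_Icc] at hx; linarith [hx.1]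
        · simp only [hI₁_def, Set.mem_Icc] at hx; linarith [hx.2]
      have h1 : |q₀|/2 ≤ |x - q₀| := by
        have h2 : |q₀| - |x| ≤ |q₀ - x| := abs_sub_abs_le_abs_sub q₀ x
        rw [abs_sub_comm] at h2
        linarith
      exact mul_le_mul_of_nonneg_left
        (Real.rpow_le_rpow_of_nonpos (by positivity) h1 (by norm_num)) hc₂.le
    have hIineq : (∫ x in I₁, c₂ * |x - q₀| ^ (-(4:ℝ)/5)) ≤ δ^2 * (c₂ * (|q₀|/2) ^ (-(4:ℝ)/5)) := by
      calc (∫ x in I₁, c₂ * |x - q₀| ^ (-(4:ℝ)/5))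
          ≤ ∫ _x in I₁, c₂ * (|q₀|/2) ^ (-(4:ℝ)/5) :=
            MeasureTheory.setIntegral_mono_on hI₁int
              (integrableOn_const measure_Icc_lt_top.ne) measurableSet_Icc hptw
        _ = δ^2 * (c₂ * (|q₀|/2) ^ (-(4:ℝ)/5)) := by
            rw [MeasureTheory.setIntegral_const, measureReal_def, hvolI₁, smul_eq_mul]
    have hfin : (∫ x in I₁, c₂ * |x - q₀| ^ (-(4:ℝ)/5)) * δ ≤ A * δ^3 := by
      have hnn : (0:ℝ) ≤ c₂ * (|q₀|/2) ^ (-(4:ℝ)/5) := by positivity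
      have hAB : c₂ * (|q₀|/2) ^ (-(4:ℝ)/5) ≤ A := by
        have : (0:ℝ) ≤ c₂ * (10 * R ^ ((1:ℝ)/5)) / m^3 := by positivity
        rw [hA_def]; linarith
      calc (∫ x in I₁, c₂ * |x - q₀| ^ (-(4:ℝ)/5)) * δ
          ≤ (δ^2 * (c₂ * (|q₀|/2) ^ (-(4:ℝ)/5))) * δ :=
            mul_le_mul_of_nonneg_right hIineq hδ0.le
        _ = (c₂ * (|q₀|/2) ^ (-(4:ℝ)/5)) * δ^3 := by ring
        _ ≤ A * δ^3 := mul_le_mul_of_nonneg_right hAB (by positivity)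
    exact hmono.trans hfin
  · -- large δ
    have hsub : I₁ ⊆ Set.Icc (q₀ - R) (q₀ + R) := by
      intro x hx
      simp only [hI₁_def, Set.mem_Icc] at hx ⊢
      have hd2 : δ^2 ≤ 1 := by simpa using pow_le_pow_left₀ hδ0.le hδ1.le 2
      constructor <;> [linarith [le_abs_self q₀, hx.1]; linarith [neg_abs_le q₀, hx.2]]
    have hRle : q₀ - R ≤ q₀ + R := by linarith
    have hbig : IntegrableOn (fun x : ℝ => c₂ * |x - q₀| ^ (-(4:ℝ)/5))
        (Set.Icc (q₀ - R) (q₀ + R)) volume :=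
      (hint _ _ hRle).const_mul c₂
    have hsetmono : (∫ x in I₁, c₂ * |x - q₀| ^ (-(4:ℝ)/5)) ≤
        ∫ x in Set.Icc (q₀ - R) (q₀ + R), c₂ * |x - q₀| ^ (-(4:ℝ)/5) :=
      MeasureTheory.setIntegral_mono_set hbig
        (Filter.Eventually.of_forall fun x => by positivity) hsub.eventuallyLE
    have hJ : (∫ x in Set.Icc (q₀ - R) (q₀ + R), |x - q₀| ^ (-(4:ℝ)/5)) =
        10 * R ^ ((1:ℝ)/5) := by
      rw [MeasureTheory.integral_Icc_eq_integral_Ioc,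
        ← intervalIntegral.integral_of_le hRle]
      have hcomp := intervalIntegral.integral_comp_sub_right (a := q₀ - R) (b := q₀ + R)
        (fun v : ℝ => |v| ^ (-(4:ℝ)/5)) q₀
      rw [show q₀ - R - q₀ = -R by ring, show q₀ + R - q₀ = R by ring] at hcomp
      rw [hcomp]
      have hpos : (∫ v in (0:ℝ)..R, |v| ^ (-(4:ℝ)/5)) = 5 * R ^ ((1:ℝ)/5) := by
        have hEq : Set.EqOn (fun v : ℝ => |v| ^ (-(4:ℝ)/5)) (fun v : ℝ => v ^ (-(4:ℝ)/5))
            (Set.uIcc 0 R) := by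
          intro v hv
          rw [Set.uIcc_of_le hR.le] at hv
          simp only
          rw [abs_of_nonneg hv.1]
        rw [intervalIntegral.integral_congr hEq, integral_rpow (Or.inl (by norm_num))]
        norm_num [Real.zero_rpow]
        ring
      have hneg : (∫ v in (-R)..(0:ℝ), |v| ^ (-(4:ℝ)/5)) = 5 * R ^ ((1:ℝ)/5) := by
        rw [show (fun v : ℝ => |v| ^ (-(4:ℝ)/5)) = (fun v : ℝ => |(-v)| ^ (-(4:ℝ)/5))
          from funext fun v => by rw [abs_neg]]
        rw [intervalIntegral.integral_comp_neg (fun v : ℝ => |v| ^ (-(4:ℝ)/5)), neg_zero, neg_neg]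
        exact hpos
      rw [← intervalIntegral.integral_add_adjacent_intervals
        (abs_rpow_intervalIntegrable (by norm_num) (-R) 0)
        (abs_rpow_intervalIntegrable (by norm_num) 0 R), hpos, hneg]
      ring
    have hIval : (∫ x in Set.Icc (q₀ - R) (q₀ + R), c₂ * |x - q₀| ^ (-(4:ℝ)/5)) =
        c₂ * (10 * R ^ ((1:ℝ)/5)) := by
      rw [MeasureTheory.integral_const_mul, hJ]
    have hm3 : m^3 ≤ δ^3 :=
      pow_le_pow_left₀ hm0.le (le_trans (min_le_left _ _) hd) 3
    have hfin : (∫ x in I₁, c₂ * |x - q₀| ^ (-(4:ℝ)/5)) * δ ≤ A * δ^3 := by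
      have hB : 0 < c₂ * (10 * R ^ ((1:ℝ)/5)) := by positivity
      calc (∫ x in I₁, c₂ * |x - q₀| ^ (-(4:ℝ)/5)) * δ
          ≤ (c₂ * (10 * R ^ ((1:ℝ)/5))) * δ :=
            mul_le_mul_of_nonneg_right (hsetmono.trans_eq hIval) hδ0.le
        _ ≤ c₂ * (10 * R ^ ((1:ℝ)/5)) := by
            nth_rewrite 2 [← mul_one (c₂ * (10 * R ^ ((1:ℝ)/5)))]
            exact mul_le_mul_of_nonneg_left hδ1.le hB.le
        _ = (c₂ * (10 * R ^ ((1:ℝ)/5)) / m^3) * m^3 :=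
            (div_mul_cancel₀ _ (by positivity : m^3 ≠ 0)).symm
        _ ≤ (c₂ * (10 * R ^ ((1:ℝ)/5)) / m^3) * δ^3 :=
            mul_le_mul_of_nonneg_left hm3 (by positivity)
        _ ≤ A * δ^3 := by
            refine mul_le_mul_of_nonneg_right ?_ (by positivity)
            have h1 : (0:ℝ) ≤ c₂ * (|q₀|/2) ^ (-(4:ℝ)/5) := by positivity
            rw [hA_def]
            linarith
    exact hmono.trans hfin
end
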